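/- The function F(t₁,t₂,t₃) = (1/2)t₃⁴ + (3/2)t₁t₂t₃ + (1/8)t₁³ + (1/16)t₂³/t₃ (the B₃¹ potential) satisfies the WDVV associativity equations on the domain t₃ ≠ 0, where the flat metric is Π_{ij} = ∂_{t₁}∂_{t_i}∂_{t_j}F (unity vector field e = ∂_{t₁}). -/

import Mathlib

/-- Partial derivative of a function of `n` real variables. -/
noncomputable def pd {n : ℕ} (i : Fin n) (f : (Fin n → ℝ) → ℝ) : (Fin n → ℝ) → ℝ :=
  fun t => deriv (fun s => f (Function.update t i s)) (t i)

section WDVVAux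

lemma hd1 (a : ℝ) (k : ℕ) (x : ℝ) : HasDerivAt (fun s : ℝ => a * s ^ k) (a * (k * x ^ (k-1))) x :=
  (hasDerivAt_pow k x).const_mul a

lemma hd2 (a : ℝ) (k : ℕ) {x : ℝ} (hx : x ≠ 0) :
    HasDerivAt (fun s : ℝ => a / s ^ k) ((0 * x ^ k - a * (k * x ^ (k - 1))) / (x ^ k) ^ 2) x :=
  (hasDerivAt_const x a).div (hasDerivAt_pow k x) (pow_ne_zero k hx)

lemma pd_congr {f g : (Fin 3 → ℝ) → ℝ} (h : ∀ u : Fin 3 → ℝ, u 2 ≠ 0 → f u = g u)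
    (j : Fin 3) (t : Fin 3 → ℝ) (ht : t 2 ≠ 0) : pd j f t = pd j g t := by
  unfold pd
  apply Filter.EventuallyEq.deriv_eq
  have hev : ∀ᶠ s in nhds (t j), (Function.update t j s) 2 ≠ 0 := by
    by_cases hj : j = 2
    · subst hj
      filter_upwards [eventually_ne_nhds ht] with s hs
      simpa using hs
    · filter_upwards with s
      rw [Function.update_of_ne (fun h => hj h.symm)]
      exact ht
  filter_upwards [hev] with s hs using h _ hs

noncomputable def Fe : (Fin 3 → ℝ) → ℝ := fun u =>
  1/2*(u 2)^4 + 3/2*u 0*u 1*u 2 + 1/8*(u 0)^3 + 1/16*(u 1)^3/u 2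
noncomputable def g0 : (Fin 3 → ℝ) → ℝ := fun u => 3/2*u 1*u 2 + 3/8*(u 0)^2
noncomputable def g1 : (Fin 3 → ℝ) → ℝ := fun u => 3/2*u 0*u 2 + 3/16*(u 1)^2/u 2
noncomputable def g2 : (Fin 3 → ℝ) → ℝ := fun u =>
  2*(u 2)^3 + 3/2*u 0*u 1 - 1/16*(u 1)^3/(u 2)^2
noncomputable def h00 : (Fin 3 → ℝ) → ℝ := fun u => 3/4*u 0
noncomputable def h01 : (Fin 3 → ℝ) → ℝ := fun u => 3/2*u 2
noncomputable def h02 : (Fin 3 → ℝ) → ℝ := fun u => 3/2*u 1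
noncomputable def h11 : (Fin 3 → ℝ) → ℝ := fun u => 3/8*u 1/u 2
noncomputable def h12 : (Fin 3 → ℝ) → ℝ := fun u => 3/2*u 0 - 3/16*(u 1)^2/(u 2)^2
noncomputable def h22 : (Fin 3 → ℝ) → ℝ := fun u => 6*(u 2)^2 + 1/8*(u 1)^3/(u 2)^3

noncomputable def kA : (Fin 3 → ℝ) → ℝ := fun _ => 3/4
noncomputable def k0 : (Fin 3 → ℝ) → ℝ := fun _ => 0
noncomputable def kB : (Fin 3 → ℝ) → ℝ := fun _ => 3/2
noncomputable def k111 : (Fin 3 → ℝ) → ℝ := fun u => 3/8/u 2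
noncomputable def k112 : (Fin 3 → ℝ) → ℝ := fun u => -(3/8)*u 1/(u 2)^2
noncomputable def k122 : (Fin 3 → ℝ) → ℝ := fun u => 3/8*(u 1)^2/(u 2)^3
noncomputable def k222 : (Fin 3 → ℝ) → ℝ := fun u => 12*u 2 - 3/8*(u 1)^3/(u 2)^4

noncomputable def G : Fin 3 → (Fin 3 → ℝ) → ℝ := ![g0, g1, g2]
noncomputable def H : Fin 3 → Fin 3 → (Fin 3 → ℝ) → ℝ :=
  ![![h00, h01, h02], ![h01, h11, h12], ![h02, h12, h22]]
noncomputable def K : Fin 3 → Fin 3 → Fin 3 → (Fin 3 → ℝ) → ℝ :=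
  ![![![kA, k0, k0], ![k0, k0, kB], ![k0, kB, k0]],
    ![![k0, k0, kB], ![k0, k111, k112], ![kB, k112, k122]],
    ![![k0, kB, k0], ![kB, k112, k122], ![k0, k122, k222]]]

section derivs
set_option linter.unusedVariables false
set_option linter.unreachableTactic false
set_option linter.unusedTactic false

-- first level
lemma pdFe0 (t : Fin 3 → ℝ) (ht : t 2 ≠ 0) : pd 0 Fe t = g0 t := by
  unfold pd Fe g0
  simp only [Function.update_self, Function.update_of_ne (show (1:Fin 3) ≠ 0 by decide),
    Function.update_of_ne (show (2:Fin 3) ≠ 0 by decide)]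
  apply HasDerivAt.deriv
  convert ((hd1 (3/2*t 1*t 2) 1 (t 0)).add (hd1 (1/8) 3 (t 0))).const_add
    (1/2*(t 2)^4 + 1/16*(t 1)^3/t 2) using 1
  all_goals try (funext s; ring)
  all_goals norm_num; try field_simp; try ring

lemma pdFe1 (t : Fin 3 → ℝ) (ht : t 2 ≠ 0) : pd 1 Fe t = g1 t := by
  unfold pd Fe g1
  simp only [Function.update_self, Function.update_of_ne (show (0:Fin 3) ≠ 1 by decide),
    Function.update_of_ne (show (2:Fin 3) ≠ 1 by decide)]
  apply HasDerivAt.deriv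
  convert ((hd1 (3/2*t 0*t 2) 1 (t 1)).add (hd1 (1/16/t 2) 3 (t 1))).const_add
    (1/2*(t 2)^4 + 1/8*(t 0)^3) using 1
  all_goals try (funext s; ring)
  all_goals norm_num; try field_simp; try ring

lemma pdFe2 (t : Fin 3 → ℝ) (ht : t 2 ≠ 0) : pd 2 Fe t = g2 t := by
  unfold pd Fe g2
  simp only [Function.update_self, Function.update_of_ne (show (0:Fin 3) ≠ 2 by decide),
    Function.update_of_ne (show (1:Fin 3) ≠ 2 by decide)]
  apply HasDerivAt.deriv
  convert (((hd1 (1/2) 4 (t 2)).add (hd1 (3/2*t 0*t 1) 1 (t 2))).add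
    (hd2 (1/16*(t 1)^3) 1 ht)).const_add (1/8*(t 0)^3) using 1
  all_goals try (funext s; simp only [Pi.add_apply]; ring)
  all_goals norm_num; try field_simp; try ring

-- second level
lemma pdg0_0 (t : Fin 3 → ℝ) (ht : t 2 ≠ 0) : pd 0 g0 t = h00 t := by
  unfold pd g0 h00
  simp only [Function.update_self, Function.update_of_ne (show (1:Fin 3) ≠ 0 by decide),
    Function.update_of_ne (show (2:Fin 3) ≠ 0 by decide)]
  apply HasDerivAt.deriv
  convert (hd1 (3/8) 2 (t 0)).const_add (3/2*t 1*t 2) using 1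
  all_goals try (funext s; ring)
  all_goals norm_num; try field_simp; try ring

lemma pdg0_1 (t : Fin 3 → ℝ) (ht : t 2 ≠ 0) : pd 1 g0 t = h01 t := by
  unfold pd g0 h01
  simp only [Function.update_self, Function.update_of_ne (show (0:Fin 3) ≠ 1 by decide),
    Function.update_of_ne (show (2:Fin 3) ≠ 1 by decide)]
  apply HasDerivAt.deriv
  convert (hd1 (3/2*t 2) 1 (t 1)).add_const (3/8*(t 0)^2) using 1
  all_goals try (funext s; ring)
  all_goals norm_num; try field_simp; try ring

lemma pdg0_2 (t : Fin 3 → ℝ) (ht : t 2 ≠ 0) : pd 2 g0 t = h02 t := by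
  unfold pd g0 h02
  simp only [Function.update_self, Function.update_of_ne (show (0:Fin 3) ≠ 2 by decide),
    Function.update_of_ne (show (1:Fin 3) ≠ 2 by decide)]
  apply HasDerivAt.deriv
  convert (hd1 (3/2*t 1) 1 (t 2)).add_const (3/8*(t 0)^2) using 1
  all_goals try (funext s; ring)
  all_goals norm_num; try field_simp; try ring

lemma pdg1_0 (t : Fin 3 → ℝ) (ht : t 2 ≠ 0) : pd 0 g1 t = h01 t := by
  unfold pd g1 h01
  simp only [Function.update_self, Function.update_of_ne (show (1:Fin 3) ≠ 0 by decide),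
    Function.update_of_ne (show (2:Fin 3) ≠ 0 by decide)]
  apply HasDerivAt.deriv
  convert (hd1 (3/2*t 2) 1 (t 0)).add_const (3/16*(t 1)^2/t 2) using 1
  all_goals try (funext s; ring)
  all_goals norm_num; try field_simp; try ring

lemma pdg1_1 (t : Fin 3 → ℝ) (ht : t 2 ≠ 0) : pd 1 g1 t = h11 t := by
  unfold pd g1 h11
  simp only [Function.update_self, Function.update_of_ne (show (0:Fin 3) ≠ 1 by decide),
    Function.update_of_ne (show (2:Fin 3) ≠ 1 by decide)]
  apply HasDerivAt.deriv
  convert (hd1 (3/16/t 2) 2 (t 1)).const_add (3/2*t 0*t 2) using 1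
  all_goals try (funext s; ring)
  all_goals norm_num; try field_simp; try ring

lemma pdg1_2 (t : Fin 3 → ℝ) (ht : t 2 ≠ 0) : pd 2 g1 t = h12 t := by
  unfold pd g1 h12
  simp only [Function.update_self, Function.update_of_ne (show (0:Fin 3) ≠ 2 by decide),
    Function.update_of_ne (show (1:Fin 3) ≠ 2 by decide)]
  apply HasDerivAt.deriv
  convert (hd1 (3/2*t 0) 1 (t 2)).add (hd2 (3/16*(t 1)^2) 1 ht) using 1
  all_goals try (funext s; ring)
  all_goals norm_num; try field_simp; try ring

lemma pdg2_0 (t : Fin 3 → ℝ) (ht : t 2 ≠ 0) : pd 0 g2 t = h02 t := by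
  unfold pd g2 h02
  simp only [Function.update_self, Function.update_of_ne (show (1:Fin 3) ≠ 0 by decide),
    Function.update_of_ne (show (2:Fin 3) ≠ 0 by decide)]
  apply HasDerivAt.deriv
  convert (hd1 (3/2*t 1) 1 (t 0)).const_add (2*(t 2)^3 - 1/16*(t 1)^3/(t 2)^2) using 1
  all_goals try (funext s; ring)
  all_goals norm_num; try field_simp; try ring

lemma pdg2_1 (t : Fin 3 → ℝ) (ht : t 2 ≠ 0) : pd 1 g2 t = h12 t := by
  unfold pd g2 h12
  simp only [Function.update_self, Function.update_of_ne (show (0:Fin 3) ≠ 1 by decide),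
    Function.update_of_ne (show (2:Fin 3) ≠ 1 by decide)]
  apply HasDerivAt.deriv
  convert ((hd1 (3/2*t 0) 1 (t 1)).add (hd1 (-(1/16)/(t 2)^2) 3 (t 1))).const_add
    (2*(t 2)^3) using 1
  all_goals try (funext s; ring)
  all_goals norm_num; try field_simp; try ring

lemma pdg2_2 (t : Fin 3 → ℝ) (ht : t 2 ≠ 0) : pd 2 g2 t = h22 t := by
  unfold pd g2 h22
  simp only [Function.update_self, Function.update_of_ne (show (0:Fin 3) ≠ 2 by decide),
    Function.update_of_ne (show (1:Fin 3) ≠ 2 by decide)]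
  apply HasDerivAt.deriv
  convert ((hd1 2 3 (t 2)).add (hd2 (-(1/16)*(t 1)^3) 2 ht)).add_const (3/2*t 0*t 1) using 1
  all_goals try (funext s; simp only [Pi.add_apply]; ring)
  all_goals norm_num; try field_simp; try ring

-- third level
lemma pdh00_0 (t : Fin 3 → ℝ) (ht : t 2 ≠ 0) : pd 0 h00 t = kA t := by
  unfold pd h00 kA
  simp only [Function.update_self]
  apply HasDerivAt.deriv
  convert hd1 (3/4) 1 (t 0) using 1
  all_goals try rfl
  all_goals try (funext s; ring)
  all_goals norm_num

lemma pdh00_1 (t : Fin 3 → ℝ) (ht : t 2 ≠ 0) : pd 1 h00 t = k0 t := by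
  unfold pd h00 k0
  simp [Function.update_of_ne (show (0:Fin 3) ≠ 1 by decide)]

lemma pdh00_2 (t : Fin 3 → ℝ) (ht : t 2 ≠ 0) : pd 2 h00 t = k0 t := by
  unfold pd h00 k0
  simp [Function.update_of_ne (show (0:Fin 3) ≠ 2 by decide)]

lemma pdh01_0 (t : Fin 3 → ℝ) (ht : t 2 ≠ 0) : pd 0 h01 t = k0 t := by
  unfold pd h01 k0
  simp [Function.update_of_ne (show (2:Fin 3) ≠ 0 by decide)]

lemma pdh01_1 (t : Fin 3 → ℝ) (ht : t 2 ≠ 0) : pd 1 h01 t = k0 t := by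
  unfold pd h01 k0
  simp [Function.update_of_ne (show (2:Fin 3) ≠ 1 by decide)]

lemma pdh01_2 (t : Fin 3 → ℝ) (ht : t 2 ≠ 0) : pd 2 h01 t = kB t := by
  unfold pd h01 kB
  simp only [Function.update_self]
  apply HasDerivAt.deriv
  convert hd1 (3/2) 1 (t 2) using 1
  all_goals try rfl
  all_goals try (funext s; ring)
  all_goals norm_num

lemma pdh02_0 (t : Fin 3 → ℝ) (ht : t 2 ≠ 0) : pd 0 h02 t = k0 t := by
  unfold pd h02 k0
  simp [Function.update_of_ne (show (1:Fin 3) ≠ 0 by decide)]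

lemma pdh02_1 (t : Fin 3 → ℝ) (ht : t 2 ≠ 0) : pd 1 h02 t = kB t := by
  unfold pd h02 kB
  simp only [Function.update_self]
  apply HasDerivAt.deriv
  convert hd1 (3/2) 1 (t 1) using 1
  all_goals try rfl
  all_goals try (funext s; ring)
  all_goals norm_num

lemma pdh02_2 (t : Fin 3 → ℝ) (ht : t 2 ≠ 0) : pd 2 h02 t = k0 t := by
  unfold pd h02 k0
  simp [Function.update_of_ne (show (1:Fin 3) ≠ 2 by decide)]

lemma pdh11_0 (t : Fin 3 → ℝ) (ht : t 2 ≠ 0) : pd 0 h11 t = k0 t := by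
  unfold pd h11 k0
  simp [Function.update_of_ne (show (1:Fin 3) ≠ 0 by decide),
    Function.update_of_ne (show (2:Fin 3) ≠ 0 by decide)]

lemma pdh11_1 (t : Fin 3 → ℝ) (ht : t 2 ≠ 0) : pd 1 h11 t = k111 t := by
  unfold pd h11 k111
  simp only [Function.update_self, Function.update_of_ne (show (2:Fin 3) ≠ 1 by decide)]
  apply HasDerivAt.deriv
  convert hd1 (3/8/t 2) 1 (t 1) using 1
  all_goals try rfl
  all_goals try (funext s; ring)
  all_goals norm_num; try field_simp; try ring

lemma pdh11_2 (t : Fin 3 → ℝ) (ht : t 2 ≠ 0) : pd 2 h11 t = k112 t := by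
  unfold pd h11 k112
  simp only [Function.update_self, Function.update_of_ne (show (1:Fin 3) ≠ 2 by decide)]
  apply HasDerivAt.deriv
  convert hd2 (3/8*t 1) 1 ht using 1
  all_goals try rfl
  all_goals try (funext s; ring)
  all_goals norm_num; try field_simp; try ring

lemma pdh12_0 (t : Fin 3 → ℝ) (ht : t 2 ≠ 0) : pd 0 h12 t = kB t := by
  unfold pd h12 kB
  simp only [Function.update_self, Function.update_of_ne (show (1:Fin 3) ≠ 0 by decide),
    Function.update_of_ne (show (2:Fin 3) ≠ 0 by decide)]
  apply HasDerivAt.deriv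
  convert (hd1 (3/2) 1 (t 0)).add_const (-(3/16*(t 1)^2/(t 2)^2)) using 1
  all_goals try (funext s; ring)
  all_goals norm_num

lemma pdh12_1 (t : Fin 3 → ℝ) (ht : t 2 ≠ 0) : pd 1 h12 t = k112 t := by
  unfold pd h12 k112
  simp only [Function.update_self, Function.update_of_ne (show (0:Fin 3) ≠ 1 by decide),
    Function.update_of_ne (show (2:Fin 3) ≠ 1 by decide)]
  apply HasDerivAt.deriv
  convert (hd1 (-(3/16)/(t 2)^2) 2 (t 1)).const_add (3/2*t 0) using 1
  all_goals try (funext s; ring)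
  all_goals norm_num; try field_simp; try ring

lemma pdh12_2 (t : Fin 3 → ℝ) (ht : t 2 ≠ 0) : pd 2 h12 t = k122 t := by
  unfold pd h12 k122
  simp only [Function.update_self, Function.update_of_ne (show (0:Fin 3) ≠ 2 by decide),
    Function.update_of_ne (show (1:Fin 3) ≠ 2 by decide)]
  apply HasDerivAt.deriv
  convert (hd2 (-(3/16)*(t 1)^2) 2 ht).const_add (3/2*t 0) using 1
  all_goals try (funext s; ring)
  all_goals norm_num; try field_simp; try ring

lemma pdh22_0 (t : Fin 3 → ℝ) (ht : t 2 ≠ 0) : pd 0 h22 t = k0 t := by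
  unfold pd h22 k0
  simp [Function.update_of_ne (show (1:Fin 3) ≠ 0 by decide),
    Function.update_of_ne (show (2:Fin 3) ≠ 0 by decide)]

lemma pdh22_1 (t : Fin 3 → ℝ) (ht : t 2 ≠ 0) : pd 1 h22 t = k122 t := by
  unfold pd h22 k122
  simp only [Function.update_self, Function.update_of_ne (show (2:Fin 3) ≠ 1 by decide)]
  apply HasDerivAt.deriv
  convert (hd1 (1/8/(t 2)^3) 3 (t 1)).const_add (6*(t 2)^2) using 1
  all_goals try (funext s; ring)
  all_goals norm_num; try field_simp; try ring

lemma pdh22_2 (t : Fin 3 → ℝ) (ht : t 2 ≠ 0) : pd 2 h22 t = k222 t := by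
  unfold pd h22 k222
  simp only [Function.update_self, Function.update_of_ne (show (1:Fin 3) ≠ 2 by decide)]
  apply HasDerivAt.deriv
  convert (hd1 6 2 (t 2)).add (hd2 (1/8*(t 1)^3) 3 ht) using 1
  all_goals try (funext s; ring)
  all_goals norm_num; try field_simp; try ring

end derivs

end WDVVAux

lemma step3 (F : (Fin 3 → ℝ) → ℝ)
    (hF : ∀ u : Fin 3 → ℝ, u 2 ≠ 0 → F u = Fe u) :
    ∀ (i j l : Fin 3) (u : Fin 3 → ℝ), u 2 ≠ 0 → pd i (pd j (pd l F)) u = K i j l u := by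
  have hg : ∀ (l : Fin 3) (u : Fin 3 → ℝ), u 2 ≠ 0 → pd l F u = G l u := by
    intro l u hu
    rw [pd_congr hF l u hu]
    fin_cases l
    · exact pdFe0 u hu
    · exact pdFe1 u hu
    · exact pdFe2 u hu
  have h2 : ∀ (j l : Fin 3) (u : Fin 3 → ℝ), u 2 ≠ 0 → pd j (pd l F) u = H j l u := by
    intro j l u hu
    rw [pd_congr (hg l) j u hu]
    fin_cases j <;> fin_cases l <;> simp only [G, H] <;> norm_num <;>
      first
        | exact pdg0_0 u hu | exact pdg0_1 u hu | exact pdg0_2 u hu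
        | exact pdg1_0 u hu | exact pdg1_1 u hu | exact pdg1_2 u hu
        | exact pdg2_0 u hu | exact pdg2_1 u hu | exact pdg2_2 u hu
  intro i j l u hu
  rw [pd_congr (h2 j l) i u hu]
  fin_cases i <;> fin_cases j <;> fin_cases l <;> simp only [H, K] <;> norm_num <;>
    first
      | exact pdh00_0 u hu | exact pdh00_1 u hu | exact pdh00_2 u hu
      | exact pdh01_0 u hu | exact pdh01_1 u hu | exact pdh01_2 u hu
      | exact pdh02_0 u hu | exact pdh02_1 u hu | exact pdh02_2 u hu
      | exact pdh11_0 u hu | exact pdh11_1 u hu | exact pdh11_2 u hu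
      | exact pdh12_0 u hu | exact pdh12_1 u hu | exact pdh12_2 u hu
      | exact pdh22_0 u hu | exact pdh22_1 u hu | exact pdh22_2 u hu


set_option maxHeartbeats 2000000 in
/-- The B₃¹ potential `F = (1/2)t₃⁴ + (3/2)t₁t₂t₃ + (1/8)t₁³ + (1/16)t₂³/t₃`
satisfies the WDVV equations on `t₃ ≠ 0`, where the flat metric is
`Π_{ij} = ∂₁∂_i∂_j F` (unity vector field `e = ∂₁`). -/
theorem stmt_15 (F : (Fin 3 → ℝ) → ℝ)
    (hF : ∀ t : Fin 3 → ℝ, t 2 ≠ 0 → F t = (1 / 2) * (t 2) ^ 4 + (3 / 2) * t 0 * t 1 * t 2 +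
      (1 / 8) * (t 0) ^ 3 + (1 / 16) * (t 1) ^ 3 / t 2) :
    ∀ t : Fin 3 → ℝ, t 2 ≠ 0 →
      ∀ i j q n : Fin 3,
        (∑ l : Fin 3, ∑ p : Fin 3,
          pd i (pd j (pd l F)) t *
            (Matrix.of fun a b : Fin 3 => pd 0 (pd a (pd b F)) t)⁻¹ l p *
              pd p (pd q (pd n F)) t) =
        (∑ l : Fin 3, ∑ p : Fin 3,
          pd n (pd j (pd l F)) t *
            (Matrix.of fun a b : Fin 3 => pd 0 (pd a (pd b F)) t)⁻¹ l p *
              pd p (pd q (pd i F)) t) := by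
  have hFe : ∀ u : Fin 3 → ℝ, u 2 ≠ 0 → F u = Fe u := by
    intro u hu; rw [hF u hu]; unfold Fe; ring
  intro t ht i j q n
  have h3 : ∀ i j l : Fin 3, pd i (pd j (pd l F)) t = K i j l t :=
    fun i j l => step3 F hFe i j l t ht
  have hM : (Matrix.of fun a b : Fin 3 => pd 0 (pd a (pd b F)) t)
      = !![3/4, 0, 0; 0, 0, 3/2; 0, 3/2, 0] := by
    ext a b
    rw [Matrix.of_apply, h3 0 a b]
    fin_cases a <;> fin_cases b <;> norm_num [K, kA, k0, kB]
  have hMinv : (!![3/4, 0, 0; 0, 0, 3/2; 0, 3/2, 0] : Matrix (Fin 3) (Fin 3) ℝ)⁻¹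
      = !![4/3, 0, 0; 0, 0, 2/3; 0, 2/3, 0] := by
    apply Matrix.inv_eq_right_inv
    norm_num [Matrix.mul_fin_three]
    exact Matrix.one_fin_three.symm
  rw [hM, hMinv]
  simp only [h3, Fin.sum_univ_three]
  norm_num [Matrix.vecHead, Matrix.vecTail]
  fin_cases i <;> fin_cases j <;> fin_cases q <;> fin_cases n <;>
    norm_num [K, kA, k0, kB, k111, k112, k122, k222, Matrix.vecHead, Matrix.vecTail, Matrix.cons_val_two] <;>
    field_simp <;> ring
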